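/- Let n ≥ 3 be an odd integer, let m ≥ 2 be an integer, let A > 0 be a real number, and let x, y be integers with y ≥ 1 satisfying x^n − m·y^n = 1 or x^n − m·y^n = −1. If in addition 1/((A+2)·y²) < |m^{1/n} − x/y|, then y^{n−2} < (A+2)/c₁, where c₁ = m^{(n−1)/n}·∏_{j=1}^{n−1} |sin(2πj/n)|. -/

import Mathlib

/-- For an odd integer `n ≥ 3`, an integer `m ≥ 2`, a real
`A > 0`, and integers `x, y` with `y ≥ 1` satisfying `x^n − m·y^n = ±1`: if
`1/((A+2)·y²) < |m^{1/n} − x/y|`, then `y^{n−2} < (A+2)/c₁`, where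
`c₁ = m^{(n−1)/n}·∏_{j=1}^{n−1}|sin(2πj/n)|`. -/
theorem stmt_13 (n : ℕ) (hn : 3 ≤ n) (hodd : Odd n) (m : ℤ) (hm : 2 ≤ m)
    (A : ℝ) (hA : 0 < A) (x y : ℤ) (hy : 1 ≤ y)
    (h : x ^ n - m * y ^ n = 1 ∨ x ^ n - m * y ^ n = -1)
    (hlow : 1 / ((A + 2) * (y : ℝ) ^ 2) <
      |(m : ℝ) ^ ((1 : ℝ) / n) - (x : ℝ) / (y : ℝ)|) :
    (y : ℝ) ^ (n - 2) < (A + 2) /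
      ((m : ℝ) ^ (((n : ℝ) - 1) / n) *
        ∏ j ∈ Finset.Icc 1 (n - 1), |Real.sin (2 * Real.pi * (j : ℝ) / n)|) := by
  have hn0 : (n:ℝ) ≠ 0 := by positivity
  have hmR : (2:ℝ) ≤ (m:ℝ) := by exact_mod_cast hm
  have hm0 : (0:ℝ) < (m:ℝ) := by linarith
  set α : ℝ := (m:ℝ) ^ ((1:ℝ)/n) with hαdef
  have hα1 : 1 ≤ α := Real.one_le_rpow (by linarith) (by positivity)
  have hα0 : 0 < α := by linarith
  have hαn : α ^ n = (m:ℝ) := by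
    rw [hαdef, ← Real.rpow_natCast ((m:ℝ) ^ ((1:ℝ)/n)) n, ← Real.rpow_mul (le_of_lt hm0),
      one_div, inv_mul_cancel₀ hn0, Real.rpow_one]
  have hyR : (1:ℝ) ≤ (y:ℝ) := by exact_mod_cast hy
  have hy0 : (0:ℝ) < (y:ℝ) := by linarith
  -- x ≥ 1
  have hyn : (1:ℤ) ≤ y ^ n := one_le_pow₀ hy
  have hxn : (1:ℤ) ≤ x ^ n := by rcases h with h | h <;> nlinarith
  have hx1 : (1:ℤ) ≤ x := by
    have := hodd.pow_pos_iff.mp (lt_of_lt_of_le one_pos hxn)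
    omega
  have hxR : (1:ℝ) ≤ (x:ℝ) := by exact_mod_cast hx1
  -- factorization over ℝ
  set S : ℝ := ∑ i ∈ Finset.range n, (x:ℝ)^i * (α*(y:ℝ))^(n-1-i) with hSdef
  have hfac : (x:ℝ) ^ n - (m:ℝ) * (y:ℝ) ^ n = S * ((x:ℝ) - α*(y:ℝ)) := by
    rw [hSdef, geom_sum₂_mul, mul_pow, hαn]
  have hSlb : (α*(y:ℝ))^(n-1) ≤ S := by
    have h0 : (0:ℕ) ∈ Finset.range n := by simp; omega
    calc (α*(y:ℝ))^(n-1) = (x:ℝ)^0 * (α*(y:ℝ))^(n-1-0) := by simp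
    _ ≤ S := Finset.single_le_sum (f := fun i => (x:ℝ)^i * (α*(y:ℝ))^(n-1-i))
        (fun i _ => by positivity) h0
  have habs : |(x:ℝ) ^ n - (m:ℝ) * (y:ℝ) ^ n| = 1 := by
    rcases h with h | h
    · have : (x:ℝ) ^ n - (m:ℝ) * (y:ℝ) ^ n = 1 := by exact_mod_cast h
      rw [this, abs_one]
    · have : (x:ℝ) ^ n - (m:ℝ) * (y:ℝ) ^ n = -1 := by exact_mod_cast h
      rw [this]; norm_num
  have hS0 : 0 < S := lt_of_lt_of_le (by positivity) hSlb
  have hkey : (α*(y:ℝ))^(n-1) * |(x:ℝ) - α*(y:ℝ)| ≤ 1 := by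
    calc (α*(y:ℝ))^(n-1) * |(x:ℝ) - α*(y:ℝ)| ≤ S * |(x:ℝ) - α*(y:ℝ)| := by
          apply mul_le_mul_of_nonneg_right hSlb (abs_nonneg _)
    _ = |S * ((x:ℝ) - α*(y:ℝ))| := by rw [abs_mul, abs_of_pos hS0]
    _ = 1 := by rw [← hfac, habs]
  -- relate |α - x/y| to |x - αy|
  have hdiff : |α - (x:ℝ)/(y:ℝ)| = |(x:ℝ) - α*(y:ℝ)| / (y:ℝ) := by
    have heq : α - (x:ℝ)/(y:ℝ) = (α*(y:ℝ) - (x:ℝ)) / (y:ℝ) := by field_simp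
    rw [heq, abs_div, abs_of_pos hy0, abs_sub_comm]
  -- product facts
  set P : ℝ := ∏ j ∈ Finset.Icc 1 (n - 1), |Real.sin (2 * Real.pi * (j : ℝ) / n)| with hPdef
  have hP1 : P ≤ 1 := by
    apply Finset.prod_le_one (fun j _ => abs_nonneg _)
    intro j _
    exact abs_le.mpr ⟨Real.neg_one_le_sin _, Real.sin_le_one _⟩
  have hP0 : 0 < P := by
    apply Finset.prod_pos
    intro j hj
    simp only [Finset.mem_Icc] at hj
    rw [abs_pos]
    intro hsin
    rw [Real.sin_eq_zero_iff] at hsin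
    obtain ⟨k, hk⟩ := hsin
    have hpi : Real.pi ≠ 0 := Real.pi_ne_zero
    have : (k:ℝ) * (n:ℝ) = 2 * (j:ℝ) := by
      have hne : (n:ℝ) ≠ 0 := hn0
      field_simp at hk
      nlinarith [Real.pi_pos]
    have hZ : (k:ℤ) * (n:ℤ) = 2 * (j:ℤ) := by exact_mod_cast this
    have hdvd : (n:ℤ) ∣ 2 * (j:ℤ) := ⟨k, by linarith⟩
    have hcop : IsCoprime (n:ℤ) 2 := by
      rcases hodd with ⟨t, ht⟩
      exact ⟨1, -t, by push_cast [ht]; ring⟩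
    have hdj : (n:ℤ) ∣ (j:ℤ) := (IsCoprime.dvd_of_dvd_mul_left hcop hdvd)
    have : (n:ℤ) ≤ (j:ℤ) := Int.le_of_dvd (by exact_mod_cast hj.1) hdj
    omega
  -- identify m^((n-1)/n) with α^(n-1)
  have hM : (m:ℝ) ^ (((n:ℝ) - 1) / n) = α ^ (n-1) := by
    rw [hαdef, ← Real.rpow_natCast ((m:ℝ) ^ ((1:ℝ)/n)) (n-1), ← Real.rpow_mul (le_of_lt hm0)]
    congr 1
    rw [Nat.cast_sub (by omega), Nat.cast_one]
    field_simp
  have hMpos : (0:ℝ) < α ^ (n-1) := by positivity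
  -- main chain
  have hchain : 1 / ((A + 2) * (y:ℝ) ^ 2) < 1 / ((α*(y:ℝ))^(n-1) * (y:ℝ)) := by
    calc 1 / ((A + 2) * (y:ℝ) ^ 2) < |α - (x:ℝ)/(y:ℝ)| := hlow
    _ = |(x:ℝ) - α*(y:ℝ)| / (y:ℝ) := hdiff
    _ ≤ 1 / ((α*(y:ℝ))^(n-1) * (y:ℝ)) := by
        rw [div_le_div_iff₀ hy0 (by positivity)]
        calc |(x:ℝ) - α*(y:ℝ)| * ((α*(y:ℝ))^(n-1) * (y:ℝ))
            = ((α*(y:ℝ))^(n-1) * |(x:ℝ) - α*(y:ℝ)|) * (y:ℝ) := by ring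
        _ ≤ 1 * (y:ℝ) := by
            apply mul_le_mul_of_nonneg_right hkey (le_of_lt hy0)
        _ = 1 * (y:ℝ) := rfl
  have hA2 : (0:ℝ) < A + 2 := by linarith
  have hmain : α^(n-1) * (y:ℝ)^n < (A + 2) * (y:ℝ)^2 := by
    rw [div_lt_div_iff₀ (by positivity) (by positivity)] at hchain
    have hexp : (α*(y:ℝ))^(n-1) * (y:ℝ) = α^(n-1) * (y:ℝ)^n := by
      rw [mul_pow, mul_assoc, ← pow_succ]
      congr 2
      omega
    nlinarith [hexp]
  rw [hM]
  rw [lt_div_iff₀ (mul_pos hMpos hP0)]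
  have hsplit : (y:ℝ)^(n-2) * (y:ℝ)^2 = (y:ℝ)^n := by
    rw [← pow_add]; congr 1; omega
  have hy2 : (0:ℝ) < (y:ℝ)^2 := by positivity
  have hps : (0:ℝ) < (y:ℝ)^(n-2) := by positivity
  have h1 : (y:ℝ)^(n-2) * α^(n-1) < A + 2 := by
    have h2 : ((y:ℝ)^(n-2) * α^(n-1)) * (y:ℝ)^2 < (A+2) * (y:ℝ)^2 := by
      calc ((y:ℝ)^(n-2) * α^(n-1)) * (y:ℝ)^2 = α^(n-1) * ((y:ℝ)^(n-2)*(y:ℝ)^2) := by ring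
      _ = α^(n-1) * (y:ℝ)^n := by rw [hsplit]
      _ < (A+2)*(y:ℝ)^2 := hmain
    exact lt_of_mul_lt_mul_right h2 hy2.le
  calc (y:ℝ)^(n-2) * (α^(n-1) * P) ≤ (y:ℝ)^(n-2) * (α^(n-1) * 1) := by
        apply mul_le_mul_of_nonneg_left _ hps.le
        exact mul_le_mul_of_nonneg_left hP1 hMpos.le
  _ = (y:ℝ)^(n-2) * α^(n-1) := by ring
  _ < A + 2 := h1
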